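/- For every integer k ≥ 2, every strong pseudo k-metric space (X, d) with |X| = n belongs to C_{k,∞}^m with m = binom(n, k): there exist (k−2)-chains f_1,…,f_m on X such that d(x_1,…,x_k) = max_{i∈[m]} |(δf_i)(x_1,…,x_k)| for all distinct x_1,…,x_k ∈ X. Consequently, the family of finite coboundary k-metric spaces with respect to the ℓ_∞ norm coincides exactly with the family of finite strong pseudo k-metric spaces. -/

import Mathlib

open scoped BigOperators

/-- An alternating real-valued function on `j`-tuples of `X`
(a `(j-1)`-dimensional chain on the complete complex on `X`). -/
def AltChain {X : Type*} {j : ℕ} (α : (Fin j → X) → ℝ) : Prop :=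
  ∀ (π : Equiv.Perm (Fin j)) (x : Fin j → X),
    α (x ∘ π) = ((Equiv.Perm.sign π : ℤ) : ℝ) * α x

/-- The boundary operator: `(∂α)(y₁,…,y_j) = ∑_{x ∈ X} α(x, y₁, …, y_j)`. -/
noncomputable def bdry {X : Type*} [Fintype X] {j : ℕ}
    (α : (Fin (j + 1) → X) → ℝ) : (Fin j → X) → ℝ :=
  fun y => ∑ x : X, α (Fin.cons x y)

/-- The elementary chain `1_t`: value `sign π` on the reordering of `t` by `π`,
and `0` on all other tuples. -/
noncomputable def unitChain {X : Type*} [DecidableEq X] {j : ℕ} (t : Fin j → X) :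
    (Fin j → X) → ℝ :=
  fun s => ∑ π : Equiv.Perm (Fin j),
    if s = t ∘ π then ((Equiv.Perm.sign π : ℤ) : ℝ) else 0

/-- The coboundary operator:
`(δf)(x₁,…,x_{j+2}) = ∑ᵢ (-1)^(i+1) f(x₁,…,x̂ᵢ,…,x_{j+2})` (`0`-indexed sign `(-1)^i`). -/
noncomputable def cobdry {X : Type*} {j : ℕ}
    (f : (Fin (j + 1) → X) → ℝ) : (Fin (j + 2) → X) → ℝ :=
  fun x => ∑ i : Fin (j + 2), (-1 : ℝ) ^ (i : ℕ) * f (x ∘ i.succAbove)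

/-- A pseudo metric of arity `K` (a pseudo `K`-metric): nonnegative, vanishing on
non-injective tuples, permutation invariant, satisfying the simplex inequality. -/
structure IsPseudoMetric {X : Type*} (K : ℕ) (d : (Fin K → X) → ℝ) : Prop where
  nonneg : ∀ x, 0 ≤ d x
  eq_zero : ∀ x, ¬ Function.Injective x → d x = 0
  perm : ∀ (π : Equiv.Perm (Fin K)) (x), d (x ∘ π) = d x
  simplex : ∀ (x : Fin K → X) (y : X),
    d x ≤ ∑ i : Fin K, d (Function.update x i y)

/-- A strong pseudo metric of arity `k + 1` (a strong pseudo `(k+1)`-metric).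
The strong simplex inequality `d t ≤ ∑_τ |α(τ)| * d(τ)` (with the sum over
`(k+1)`-element subsets `τ` of `X`, each evaluated on any fixed ordering of `τ`)
is stated in the equivalent form `(k+1)! * d t ≤ ∑_s |α(s)| * d(s)` with the sum
over all `(k+1)`-tuples `s`: since `α` is alternating and `d` is permutation
invariant, the summand depends only on the underlying set of `s` (it vanishes on
tuples with repeated entries), and each `(k+1)`-element subset has exactly
`(k+1)!` orderings. -/
structure IsStrongPseudoMetric {X : Type*} [Fintype X] [DecidableEq X] (k : ℕ)
    (d : (Fin (k + 1) → X) → ℝ) : Prop where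
  nonneg : ∀ x, 0 ≤ d x
  eq_zero : ∀ x, ¬ Function.Injective x → d x = 0
  perm : ∀ (π : Equiv.Perm (Fin (k + 1))) (x), d (x ∘ π) = d x
  strong_simplex : ∀ t : Fin (k + 1) → X, Function.Injective t →
    ∀ α : (Fin (k + 1) → X) → ℝ, AltChain α → bdry α = bdry (unitChain t) →
      ((k + 1).factorial : ℝ) * d t ≤ ∑ s : Fin (k + 1) → X, |α s| * d s

/-- `(X, d)` is a coboundary metric of arity `k + 2` in `m` dimensions with respect
to the norm `ν` on `ℝ^m`: there are chains `f 1, …, f m` on `(k+1)`-tuples (i.e.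
`(k+2)-2`-dimensional chains for arity `k+2`) whose simultaneous coboundary
realizes `d` on injective tuples, and `d` vanishes on non-injective tuples. -/
def IsCoboundaryMetric {X : Type*} (k m : ℕ) (ν : (Fin m → ℝ) → ℝ)
    (d : (Fin (k + 2) → X) → ℝ) : Prop :=
  ∃ f : Fin m → ((Fin (k + 1) → X) → ℝ),
    (∀ i, AltChain (f i)) ∧
    (∀ x, Function.Injective x → d x = ν (fun i => cobdry (f i) x)) ∧
    (∀ x, ¬ Function.Injective x → d x = 0)

/-- `ν` is a norm on `ℝ^m`. -/
structure IsNorm {m : ℕ} (ν : (Fin m → ℝ) → ℝ) : Prop where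
  nonneg : ∀ x, 0 ≤ ν x
  eq_zero_iff : ∀ x, ν x = 0 ↔ x = 0
  homog : ∀ (c : ℝ) (x), ν (c • x) = |c| * ν x
  triangle : ∀ x y, ν (x + y) ≤ ν x + ν y

/-- The `ℓ_p` norm on `ℝ^m` for real `p`. -/
noncomputable def lpNorm (p : ℝ) {m : ℕ} (x : Fin m → ℝ) : ℝ :=
  (∑ i, |x i| ^ p) ^ (1 / p)

/-- The `ℓ_1` norm on `ℝ^m`. -/
noncomputable def l1Norm {m : ℕ} (x : Fin m → ℝ) : ℝ := ∑ i, |x i|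

/-- The `ℓ_2` (Euclidean) norm on `ℝ^m`. -/
noncomputable def l2Norm {m : ℕ} (x : Fin m → ℝ) : ℝ := Real.sqrt (∑ i, x i ^ 2)

/-- The `ℓ_∞` norm on `ℝ^m` (the sup norm, which is the norm of `Fin m → ℝ`). -/
noncomputable def linfNorm {m : ℕ} (x : Fin m → ℝ) : ℝ := ‖x‖

/- The apex extension of `d` (of arity `K`), with the apex being
`none : Option X` (a new element not in `X`): on an injective `(K+1)`-tuple
containing the apex in position `i` it is `d` of the tuple with position `i`
removed, and it is `0` on all other tuples. -/
open Classical in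
noncomputable def apexExt {X : Type*} {K : ℕ} (d : (Fin K → X) → ℝ) :
    (Fin (K + 1) → Option X) → ℝ := fun x =>
  if h : Function.Injective x ∧ ∃ i, x i = none then
    d (fun j =>
      Option.get (x ((Classical.choose h.2).succAbove j))
        (by
          rw [Option.isSome_iff_ne_none]
          intro hnone
          exact Fin.succAbove_ne (Classical.choose h.2) j
            (h.1 (hnone.trans (Classical.choose_spec h.2).symm))))
  else 0

/-- The `K`-dimensional volume of the simplex with vertices `y 0, …, y K` in `ℝ^m`:
`(1/K!) * √(det (AᵀA))` where `A` is the `m × K` matrix with columns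
`y i - y 0`, `i = 1, …, K`. -/
noncomputable def simplexVolume {m K : ℕ} (y : Fin (K + 1) → (Fin m → ℝ)) : ℝ :=
  (1 / (K.factorial : ℝ)) *
    Real.sqrt
      (Matrix.det
        (Matrix.of fun i j : Fin K =>
          ∑ l : Fin m, (y i.succ l - y 0 l) * (y j.succ l - y 0 l)))

set_option linter.unusedSectionVars false
set_option linter.unusedVariables false

namespace Stmt8
open Equiv Finset

noncomputable def sgn {n : ℕ} (π : Equiv.Perm (Fin n)) : ℝ := ((Equiv.Perm.sign π : ℤ) : ℝ)

lemma sgn_mul_self {n : ℕ} (π : Equiv.Perm (Fin n)) : sgn π * sgn π = 1 := by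
  rcases Int.units_eq_one_or (Equiv.Perm.sign π) with h | h <;> simp [sgn, h]

lemma abs_sgn {n : ℕ} (π : Equiv.Perm (Fin n)) : |sgn π| = 1 := by
  rcases Int.units_eq_one_or (Equiv.Perm.sign π) with h | h <;> simp [sgn, h]

lemma sgn_mul {n : ℕ} (π τ : Equiv.Perm (Fin n)) : sgn (π * τ) = sgn π * sgn τ := by
  simp [sgn]

lemma sgn_inv {n : ℕ} (π : Equiv.Perm (Fin n)) : sgn π⁻¹ = sgn π := by
  simp [sgn]

lemma sgn_one {n : ℕ} : sgn (1 : Equiv.Perm (Fin n)) = 1 := by simp [sgn]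

variable {X : Type*} {n : ℕ}

lemma comp_perm_comp (x : Fin n → X) (π τ : Equiv.Perm (Fin n)) :
    (x ∘ π) ∘ τ = x ∘ (π * τ) := by
  ext i; rfl

lemma comp_one (x : Fin n → X) : x ∘ ⇑(1 : Equiv.Perm (Fin n)) = x := rfl

lemma comp_perm_cancel {x y : Fin n → X} (τ : Equiv.Perm (Fin n)) :
    x ∘ ⇑τ = y ∘ ⇑τ ↔ x = y := by
  constructor
  · intro h
    funext i
    have := congrFun h (τ⁻¹ i)
    simpa using this
  · rintro rfl; rfl

lemma comp_right_inj {t : Fin n → X} (ht : Function.Injective t)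
    {π π' : Equiv.Perm (Fin n)} (h : t ∘ ⇑π = t ∘ ⇑π') : π = π' :=
  Equiv.ext (fun i => ht (congrFun h i))

lemma comp_inv_comp (y : Fin n → X) (τ : Equiv.Perm (Fin n)) :
    (y ∘ ⇑τ⁻¹) ∘ ⇑τ = y :=
  funext (fun i => congrArg y (Equiv.symm_apply_apply τ i))

lemma comp_comp_inv (y : Fin n → X) (τ : Equiv.Perm (Fin n)) :
    (y ∘ ⇑τ) ∘ ⇑τ⁻¹ = y :=
  funext (fun i => congrArg y (Equiv.apply_symm_apply τ i))

/-- unnormalized antisymmetrization -/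
noncomputable def Asym (F : (Fin n → X) → ℝ) : (Fin n → X) → ℝ :=
  fun x => ∑ π : Equiv.Perm (Fin n), sgn π * F (x ∘ π)

lemma asym_alt (F : (Fin n → X) → ℝ) : AltChain (Asym F) := by
  intro σ x
  show ∑ π : Equiv.Perm (Fin n), sgn π * F ((x ∘ σ) ∘ π) = sgn σ * ∑ π, sgn π * F (x ∘ π)
  rw [Finset.mul_sum]
  refine Fintype.sum_equiv (Equiv.mulLeft σ) _ _ (fun π => ?_)
  have h1 : (Equiv.mulLeft σ) π = σ * π := rfl
  rw [comp_perm_comp, h1, sgn_mul, ← mul_assoc, ← mul_assoc, sgn_mul_self, one_mul]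

lemma asym_of_alt {F : (Fin n → X) → ℝ} (h : AltChain F) :
    Asym F = (n.factorial : ℝ) • F := by
  funext x
  show ∑ π : Equiv.Perm (Fin n), sgn π * F (x ∘ π) = (n.factorial : ℝ) • F x
  have key : ∀ π : Equiv.Perm (Fin n), sgn π * F (x ∘ π) = F x := by
    intro π
    rw [h π x]
    show sgn π * (sgn π * F x) = F x
    rw [← mul_assoc, sgn_mul_self, one_mul]
  rw [Finset.sum_congr rfl (fun π _ => key π), Finset.sum_const, Finset.card_univ,
    Fintype.card_perm, Fintype.card_fin]
  simp [smul_eq_mul]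

lemma alt_eq_zero_of_not_injective {α : (Fin n → X) → ℝ} (h : AltChain α)
    {x : Fin n → X} (hx : ¬ Function.Injective x) : α x = 0 := by
  rw [Function.not_injective_iff] at hx
  obtain ⟨i, j, hij, hne⟩ := hx
  have hxs : x ∘ (Equiv.swap i j) = x := by
    funext l
    rcases eq_or_ne l i with rfl | hi
    · simp [Equiv.swap_apply_left, hij]
    rcases eq_or_ne l j with rfl | hj
    · simp [Equiv.swap_apply_right, hij]
    · simp [Function.comp, Equiv.swap_apply_of_ne_of_ne hi hj]
  have := h (Equiv.swap i j) x
  rw [hxs, Equiv.Perm.sign_swap hne] at this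
  push_cast at this
  linarith

lemma alt_zero : AltChain (0 : (Fin n → X) → ℝ) := by
  intro π x
  show (0 : ℝ) = sgn π * 0
  rw [mul_zero]

lemma alt_smul {h : (Fin n → X) → ℝ} (hh : AltChain h) (c : ℝ) : AltChain (c • h) := by
  intro π x
  show c * h (x ∘ π) = _ * (c * h x)
  rw [hh π x]
  ring

lemma alt_add {h g : (Fin n → X) → ℝ} (hh : AltChain h) (hg : AltChain g) :
    AltChain (h + g) := by
  intro π x
  show h (x ∘ π) + g (x ∘ π) = _ * (h x + g x)
  rw [hh π x, hg π x]
  ring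

lemma alt_neg {h : (Fin n → X) → ℝ} (hh : AltChain h) : AltChain (-h) := by
  intro π x
  show -(h (x ∘ π)) = _ * (-(h x))
  rw [hh π x]
  ring

lemma asym_pair [Fintype X] (F G : (Fin n → X) → ℝ) :
    ∑ s : Fin n → X, Asym F s * G s = ∑ s : Fin n → X, F s * Asym G s := by
  classical
  have key : ∀ π : Equiv.Perm (Fin n),
      ∑ s : Fin n → X, F (s ∘ π) * G s = ∑ s : Fin n → X, F s * G (s ∘ ⇑π⁻¹) := by
    intro π
    refine Fintype.sum_equiv (Equiv.arrowCongr π.symm (Equiv.refl X)) _ _ (fun s => ?_)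
    have he : (Equiv.arrowCongr π.symm (Equiv.refl X)) s = s ∘ ⇑π := by
      funext i; simp [Equiv.arrowCongr]
    rw [he]
    have h3 : (s ∘ ⇑π) ∘ ⇑π⁻¹ = s := by funext i; simp
    rw [h3]
  calc ∑ s : Fin n → X, Asym F s * G s
      = ∑ s : Fin n → X, ∑ π : Equiv.Perm (Fin n), sgn π * F (s ∘ π) * G s := by
        refine Finset.sum_congr rfl (fun s _ => ?_)
        rw [Asym, Finset.sum_mul]
    _ = ∑ π : Equiv.Perm (Fin n), ∑ s : Fin n → X, sgn π * F (s ∘ π) * G s :=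
        Finset.sum_comm
    _ = ∑ π : Equiv.Perm (Fin n), sgn π * ∑ s : Fin n → X, F (s ∘ π) * G s := by
        refine Finset.sum_congr rfl (fun π _ => ?_)
        rw [Finset.mul_sum]
        exact Finset.sum_congr rfl (fun s _ => by ring)
    _ = ∑ π : Equiv.Perm (Fin n), sgn π * ∑ s : Fin n → X, F s * G (s ∘ ⇑π⁻¹) := by
        refine Finset.sum_congr rfl (fun π _ => by rw [key π])
    _ = ∑ π : Equiv.Perm (Fin n), sgn π * ∑ s : Fin n → X, F s * G (s ∘ ⇑π) := by
        refine Fintype.sum_equiv (Equiv.inv (Equiv.Perm (Fin n))) _ _ (fun π => ?_)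
        have h2 : (Equiv.inv (Equiv.Perm (Fin n))) π = π⁻¹ := rfl
        rw [h2, sgn_inv]
    _ = ∑ π : Equiv.Perm (Fin n), ∑ s : Fin n → X, F s * (sgn π * G (s ∘ ⇑π)) := by
        refine Finset.sum_congr rfl (fun π _ => ?_)
        rw [Finset.mul_sum]
        exact Finset.sum_congr rfl (fun s _ => by ring)
    _ = ∑ s : Fin n → X, ∑ π : Equiv.Perm (Fin n), F s * (sgn π * G (s ∘ ⇑π)) :=
        Finset.sum_comm
    _ = ∑ s : Fin n → X, F s * Asym G s := by
        refine Finset.sum_congr rfl (fun s _ => ?_)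
        rw [Asym, Finset.mul_sum]

/-- the permutation of `Fin (n+2)` sending `0 ↦ i` and `succ j ↦ i.succAbove (ρ j)` -/
noncomputable def Phi {n : ℕ} (p : Fin (n + 2) × Equiv.Perm (Fin (n + 1))) :
    Equiv.Perm (Fin (n + 2)) :=
  (Fin.cycleRange p.1)⁻¹ * Equiv.Perm.decomposeFin.symm (0, p.2)

lemma phi_zero {n : ℕ} (i : Fin (n + 2)) (ρ : Equiv.Perm (Fin (n + 1))) :
    Phi (i, ρ) 0 = i := by
  have h1 : Equiv.Perm.decomposeFin.symm (0, ρ) 0 = (0 : Fin (n+2)) :=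
    Equiv.Perm.decomposeFin_symm_apply_zero 0 ρ
  have h2 : (Fin.cycleRange i)⁻¹ 0 = i := by
    rw [← Fin.cycleRange_self i]
    exact Equiv.symm_apply_apply _ _
  rw [Phi, Equiv.Perm.mul_apply, h1, h2]

lemma phi_succ {n : ℕ} (i : Fin (n + 2)) (ρ : Equiv.Perm (Fin (n + 1))) (j : Fin (n + 1)) :
    Phi (i, ρ) j.succ = i.succAbove (ρ j) := by
  have h1 : Equiv.Perm.decomposeFin.symm (0, ρ) j.succ = (ρ j).succ := by
    rw [Equiv.Perm.decomposeFin_symm_apply_succ]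
    simp
  have h2 : (Fin.cycleRange i)⁻¹ (ρ j).succ = i.succAbove (ρ j) := by
    rw [← Fin.cycleRange_succAbove i (ρ j)]
    exact Equiv.symm_apply_apply _ _
  rw [Phi, Equiv.Perm.mul_apply, h1, h2]

lemma sgn_phi {n : ℕ} (i : Fin (n + 2)) (ρ : Equiv.Perm (Fin (n + 1))) :
    sgn (Phi (i, ρ)) = (-1 : ℝ) ^ (i : ℕ) * sgn ρ := by
  rw [Phi, sgn]
  rw [map_mul, map_inv, Fin.sign_cycleRange, Equiv.Perm.decomposeFin.symm_sign]
  simp [sgn]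

lemma phi_bijective {n : ℕ} : Function.Bijective (Phi (n := n)) := by
  rw [Fintype.bijective_iff_injective_and_card]
  constructor
  · rintro ⟨i, ρ⟩ ⟨i', ρ'⟩ h
    have hi : i = i' := by rw [← phi_zero i ρ, ← phi_zero i' ρ', h]
    subst hi
    have h2 : Equiv.Perm.decomposeFin.symm (0, ρ) = Equiv.Perm.decomposeFin.symm (0, ρ') := by
      have h4 := h
      rw [Phi, Phi] at h4
      exact mul_left_cancel h4
    have h3 : ((0 : Fin (n+2)), ρ) = ((0 : Fin (n+2)), ρ') :=
      Equiv.Perm.decomposeFin.symm.injective h2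
    simp at h3
    rw [h3]
  · simp only [Fintype.card_prod, Fintype.card_perm, Fintype.card_fin]
    exact (Nat.factorial_succ (n+1)).symm

lemma asym_tail (G : (Fin (n + 1) → X) → ℝ) :
    Asym (fun x : Fin (n + 2) → X => G (x ∘ Fin.succ)) = cobdry (Asym G) := by
  funext x
  have hb := Fintype.sum_bijective Phi (phi_bijective (n := n))
    (fun p => sgn (Phi p) * G ((x ∘ ⇑(Phi p)) ∘ Fin.succ))
    (fun π => sgn π * G ((x ∘ ⇑π) ∘ Fin.succ))
    (fun p => rfl)
  show ∑ π : Equiv.Perm (Fin (n+2)), sgn π * G ((x ∘ ⇑π) ∘ Fin.succ) = _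
  rw [← hb, Fintype.sum_prod_type]
  show _ = ∑ i : Fin (n + 2), (-1 : ℝ) ^ (i : ℕ) * Asym G (x ∘ i.succAbove)
  refine Finset.sum_congr rfl (fun i _ => ?_)
  rw [Asym, Finset.mul_sum]
  refine Finset.sum_congr rfl (fun ρ _ => ?_)
  have harg : (x ∘ ⇑(Phi (i, ρ))) ∘ Fin.succ = (x ∘ i.succAbove) ∘ ⇑ρ := by
    funext j
    show x (Phi (i, ρ) j.succ) = x (i.succAbove (ρ j))
    rw [phi_succ]
  rw [harg, sgn_phi]
  ring

lemma cobdry_smul (c : ℝ) (f : (Fin (n + 1) → X) → ℝ) :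
    cobdry (c • f) = c • cobdry f := by
  funext x
  show ∑ i : Fin (n + 2), (-1 : ℝ) ^ (i : ℕ) * (c * f (x ∘ i.succAbove)) = c * ∑ i : Fin (n+2), _
  rw [Finset.mul_sum]
  exact Finset.sum_congr rfl (fun i _ => by ring)

lemma alt_cobdry {f : (Fin (n + 1) → X) → ℝ} (hf : AltChain f) : AltChain (cobdry f) := by
  have h1 : Asym f = ((n+1).factorial : ℝ) • f := asym_of_alt hf
  have h2 : cobdry (Asym f) = ((n+1).factorial : ℝ) • cobdry f := by
    rw [h1, cobdry_smul]
  have h3 : cobdry f = (((n+1).factorial : ℝ))⁻¹ • cobdry (Asym f) := by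
    rw [h2, smul_smul, inv_mul_cancel₀ (by positivity), one_smul]
  rw [h3, ← asym_tail]
  exact alt_smul (asym_alt _) _

section UnitChain
variable [DecidableEq X]

lemma unitChain_alt (t : Fin n → X) : AltChain (unitChain t) := by
  intro τ x
  show ∑ π : Equiv.Perm (Fin n), ite (x ∘ ⇑τ = t ∘ ⇑π) (sgn π) 0
      = sgn τ * ∑ π : Equiv.Perm (Fin n), ite (x = t ∘ ⇑π) (sgn π) 0
  rw [Finset.mul_sum]
  refine Fintype.sum_equiv (Equiv.mulRight τ⁻¹) _ _ (fun π => ?_)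
  have h1 : (Equiv.mulRight τ⁻¹) π = π * τ⁻¹ := rfl
  rw [h1]
  have hcond : (x ∘ ⇑τ = t ∘ ⇑π) ↔ (x = t ∘ ⇑(π * τ⁻¹)) := by
    rw [← comp_perm_comp]
    constructor
    · intro h; rw [← h, comp_comp_inv]
    · intro h; rw [h, comp_inv_comp]
  by_cases h : x ∘ ⇑τ = t ∘ ⇑π
  · rw [if_pos h, if_pos (hcond.1 h), sgn_mul, sgn_inv,
      show sgn τ * (sgn π * sgn τ) = sgn π * (sgn τ * sgn τ) by ring, sgn_mul_self, mul_one]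
  · rw [if_neg h, if_neg (fun hh => h (hcond.2 hh)), mul_zero]

lemma unitChain_comp {t : Fin n → X} (ht : Function.Injective t) (π : Equiv.Perm (Fin n)) :
    unitChain t (t ∘ ⇑π) = sgn π := by
  rw [unitChain]
  rw [Finset.sum_eq_single π]
  · rw [if_pos rfl]; rfl
  · intro π' _ hne
    rw [if_neg]
    intro h
    exact hne (comp_right_inj ht h.symm)
  · intro h
    exact absurd (Finset.mem_univ π) h

lemma unitChain_self {t : Fin n → X} (ht : Function.Injective t) :
    unitChain t t = 1 := by
  have := unitChain_comp ht 1
  rw [comp_one, sgn_one] at this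
  exact this

lemma unitChain_ne_zero {t : Fin n → X} (ht : Function.Injective t) :
    unitChain t ≠ 0 := by
  intro h
  have h2 := unitChain_self ht
  rw [h, Pi.zero_apply] at h2
  exact one_ne_zero h2.symm

lemma unitChain_eq_zero {t s : Fin n → X} (hs : ∀ π : Equiv.Perm (Fin n), s ≠ t ∘ ⇑π) :
    unitChain t s = 0 := by
  rw [unitChain]
  refine Finset.sum_eq_zero (fun π _ => ?_)
  rw [if_neg (hs π)]

lemma pairing_unitChain [Fintype X] {h : (Fin n → X) → ℝ} (hh : AltChain h)
    (t : Fin n → X) :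
    ∑ s : Fin n → X, unitChain t s * h s = (n.factorial : ℝ) * h t := by
  classical
  have step1 : ∀ π : Equiv.Perm (Fin n),
      ∑ s : Fin n → X, (if s = t ∘ ⇑π then sgn π else 0) * h s = sgn π * h (t ∘ ⇑π) := by
    intro π
    rw [Finset.sum_eq_single (t ∘ ⇑π)]
    · rw [if_pos rfl]
    · intro s _ hne
      rw [if_neg hne, zero_mul]
    · intro habs
      exact absurd (Finset.mem_univ _) habs
  calc ∑ s : Fin n → X, unitChain t s * h s
      = ∑ s : Fin n → X, ∑ π : Equiv.Perm (Fin n), (if s = t ∘ ⇑π then sgn π else 0) * h s := by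
        refine Finset.sum_congr rfl (fun s _ => ?_)
        rw [unitChain, Finset.sum_mul]
        rfl
    _ = ∑ π : Equiv.Perm (Fin n), ∑ s : Fin n → X, (if s = t ∘ ⇑π then sgn π else 0) * h s :=
        Finset.sum_comm
    _ = ∑ π : Equiv.Perm (Fin n), sgn π * h (t ∘ ⇑π) :=
        Finset.sum_congr rfl (fun π _ => step1 π)
    _ = (n.factorial : ℝ) * h t := by
        have := congrFun (asym_of_alt hh) t
        rw [Asym] at this
        rw [this]
        rfl

lemma sum_abs_unitChain [Fintype X] {t : Fin n → X} (ht : Function.Injective t)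
    {d : (Fin n → X) → ℝ} (hperm : ∀ (π : Equiv.Perm (Fin n)) x, d (x ∘ π) = d x) :
    ∑ s : Fin n → X, |unitChain t s| * d s = (n.factorial : ℝ) * d t := by
  classical
  have step0 : ∀ s : Fin n → X,
      |unitChain t s| * d s = ∑ π : Equiv.Perm (Fin n), if s = t ∘ ⇑π then d s else 0 := by
    intro s
    by_cases hex : ∃ π : Equiv.Perm (Fin n), s = t ∘ ⇑π
    · obtain ⟨π₀, hπ₀⟩ := hex
      have h1 : unitChain t s = sgn π₀ := by rw [hπ₀]; exact unitChain_comp ht π₀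
      have h2 : ∑ π : Equiv.Perm (Fin n), (if s = t ∘ ⇑π then d s else 0) = d s := by
        rw [Finset.sum_eq_single π₀]
        · rw [if_pos hπ₀]
        · intro π' _ hne
          rw [if_neg]
          intro h
          exact hne (comp_right_inj ht ((hπ₀.symm.trans h).symm))
        · intro habs; exact absurd (Finset.mem_univ _) habs
      rw [h1, h2, abs_sgn, one_mul]
    · push_neg at hex
      rw [unitChain_eq_zero hex, abs_zero, zero_mul]
      symm
      refine Finset.sum_eq_zero (fun π _ => ?_)
      rw [if_neg (hex π)]
  calc ∑ s : Fin n → X, |unitChain t s| * d s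
      = ∑ s : Fin n → X, ∑ π : Equiv.Perm (Fin n), (if s = t ∘ ⇑π then d s else 0) :=
        Finset.sum_congr rfl (fun s _ => step0 s)
    _ = ∑ π : Equiv.Perm (Fin n), ∑ s : Fin n → X, (if s = t ∘ ⇑π then d s else 0) :=
        Finset.sum_comm
    _ = ∑ π : Equiv.Perm (Fin n), d (t ∘ ⇑π) := by
        refine Finset.sum_congr rfl (fun π _ => ?_)
        rw [Finset.sum_eq_single (t ∘ ⇑π)]
        · rw [if_pos rfl]
        · intro s _ hne; rw [if_neg hne]
        · intro habs; exact absurd (Finset.mem_univ _) habs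
    _ = ∑ _π : Equiv.Perm (Fin n), d t :=
        Finset.sum_congr rfl (fun π _ => hperm π t)
    _ = (n.factorial : ℝ) * d t := by
        rw [Finset.sum_const, Finset.card_univ, Fintype.card_perm, Fintype.card_fin,
          nsmul_eq_mul]

end UnitChain

section Bdry
variable [Fintype X]

lemma bdry_add (α β : (Fin (n + 1) → X) → ℝ) : bdry (α + β) = bdry α + bdry β := by
  funext y
  show ∑ x : X, (α (Fin.cons x y) + β (Fin.cons x y)) = _
  rw [Finset.sum_add_distrib]
  rfl

lemma bdry_smul (c : ℝ) (α : (Fin (n + 1) → X) → ℝ) : bdry (c • α) = c • bdry α := by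
  funext y
  show ∑ x : X, c * α (Fin.cons x y) = c * ∑ x : X, α (Fin.cons x y)
  rw [Finset.mul_sum]

lemma bdry_neg (α : (Fin (n + 1) → X) → ℝ) : bdry (-α) = -bdry α := by
  funext y
  show ∑ x : X, -(α (Fin.cons x y)) = -∑ x : X, α (Fin.cons x y)
  rw [Finset.sum_neg_distrib]

lemma bdry_zero : bdry (0 : (Fin (n + 1) → X) → ℝ) = 0 := by
  funext y
  show ∑ _x : X, (0:ℝ) = 0
  rw [Finset.sum_const, smul_zero]

lemma tail_pair (F : (Fin (n + 1) → X) → ℝ) (β : (Fin (n + 2) → X) → ℝ) :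
    ∑ y : Fin (n + 1) → X, F y * bdry β y
      = ∑ s : Fin (n + 2) → X, F (s ∘ Fin.succ) * β s := by
  classical
  have h1 : ∑ y : Fin (n + 1) → X, F y * bdry β y
      = ∑ p : X × (Fin (n + 1) → X), F p.2 * β (Fin.cons p.1 p.2) := by
    rw [Fintype.sum_prod_type]
    rw [Finset.sum_comm]
    refine Finset.sum_congr rfl (fun y _ => ?_)
    rw [bdry, Finset.mul_sum]
  rw [h1]
  refine Fintype.sum_equiv (Fin.consEquiv (fun _ : Fin (n+2) => X)) _ _ (fun p => ?_)
  have he : (Fin.consEquiv (fun _ : Fin (n+2) => X)) p = Fin.cons p.1 p.2 := rfl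
  rw [he]
  have h2 : (Fin.cons p.1 p.2 : Fin (n+2) → X) ∘ Fin.succ = p.2 := by
    funext j
    exact Fin.cons_succ (α := fun _ : Fin (n+2) => X) p.1 p.2 j
  rw [h2]

/-- Asym as a linear map -/
noncomputable def AsymLM : ((Fin n → X) → ℝ) →ₗ[ℝ] ((Fin n → X) → ℝ) where
  toFun := Asym
  map_add' F G := by
    funext x
    show ∑ π : Equiv.Perm (Fin n), sgn π * (F (x ∘ π) + G (x ∘ π)) = _
    have : ∀ π : Equiv.Perm (Fin n), sgn π * (F (x ∘ π) + G (x ∘ π))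
        = sgn π * F (x ∘ π) + sgn π * G (x ∘ π) := fun π => by ring
    rw [Finset.sum_congr rfl (fun π _ => this π), Finset.sum_add_distrib]
    rfl
  map_smul' c F := by
    funext x
    show ∑ π : Equiv.Perm (Fin n), sgn π * (c * F (x ∘ π)) = c * ∑ π, sgn π * F (x ∘ π)
    rw [Finset.mul_sum]
    exact Finset.sum_congr rfl (fun π _ => by ring)

/-- bdry as a linear map -/
noncomputable def bdryLM : ((Fin (n + 1) → X) → ℝ) →ₗ[ℝ] ((Fin n → X) → ℝ) where
  toFun := bdry
  map_add' := bdry_add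
  map_smul' := bdry_smul

end Bdry

section NN
variable [Fintype X] [DecidableEq X]

/-- value of a chain against `d` -/
noncomputable def chainVal (d α : (Fin (n + 2) → X) → ℝ) : ℝ :=
  (((n + 2).factorial : ℝ))⁻¹ * ∑ s : Fin (n + 2) → X, |α s| * d s

/-- normalized antisymmetrization -/
noncomputable def asymN (β : (Fin (n + 2) → X) → ℝ) : (Fin (n + 2) → X) → ℝ :=
  (((n + 2).factorial : ℝ))⁻¹ • Asym β

lemma facpos : (0 : ℝ) < ((n + 2).factorial : ℝ) := by
  exact_mod_cast Nat.factorial_pos (n + 2)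

lemma asymN_alt (β : (Fin (n + 2) → X) → ℝ) : AltChain (asymN β) :=
  alt_smul (asym_alt β) _

lemma asymN_of_alt {β : (Fin (n + 2) → X) → ℝ} (hβ : AltChain β) : asymN β = β := by
  rw [asymN, asym_of_alt hβ, smul_smul, inv_mul_cancel₀ (ne_of_gt facpos), one_smul]

lemma asymN_smul (c : ℝ) (β : (Fin (n + 2) → X) → ℝ) : asymN (c • β) = c • asymN β := by
  rw [asymN, asymN, show Asym (c • β) = AsymLM (c • β) from rfl, map_smul, smul_comm]
  rfl

lemma asymN_add (β γ : (Fin (n + 2) → X) → ℝ) : asymN (β + γ) = asymN β + asymN γ := by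
  rw [asymN, asymN, asymN, show Asym (β + γ) = AsymLM (β + γ) from rfl, map_add, smul_add]
  rfl

lemma asymN_neg (β : (Fin (n + 2) → X) → ℝ) : asymN (-β) = -asymN β := by
  have h := asymN_smul (X := X) (n := n) (-1) β
  rw [neg_one_smul, neg_one_smul] at h
  exact h

/-- the constraint set for the sublinear functional -/
def chainSet (d β : (Fin (n + 2) → X) → ℝ) : Set ℝ :=
  {r | ∃ α, AltChain α ∧ bdry α = bdry (asymN β) ∧ r = chainVal d α}

noncomputable def NN (d β : (Fin (n + 2) → X) → ℝ) : ℝ := sInf (chainSet d β)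

variable {d : (Fin (n + 2) → X) → ℝ}

lemma chainVal_nonneg (h0 : ∀ x, 0 ≤ d x) (α : (Fin (n + 2) → X) → ℝ) :
    0 ≤ chainVal d α :=
  mul_nonneg (inv_nonneg.2 (le_of_lt facpos))
    (Finset.sum_nonneg (fun s _ => mul_nonneg (abs_nonneg _) (h0 s)))

lemma chainVal_smul {c : ℝ} (hc : 0 ≤ c) (α : (Fin (n + 2) → X) → ℝ) :
    chainVal d (c • α) = c * chainVal d α := by
  rw [chainVal, chainVal]
  have key : ∀ s : Fin (n+2) → X, |(c • α) s| * d s = c * (|α s| * d s) := by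
    intro s
    show |c * α s| * d s = _
    rw [abs_mul, abs_of_nonneg hc]
    ring
  rw [Finset.sum_congr rfl (fun s _ => key s), ← Finset.mul_sum]
  ring

lemma chainSet_nonempty (β : (Fin (n + 2) → X) → ℝ) : (chainSet d β).Nonempty :=
  ⟨chainVal d (asymN β), asymN β, asymN_alt β, rfl, rfl⟩

lemma chainSet_bddBelow (h0 : ∀ x, 0 ≤ d x) (β : (Fin (n + 2) → X) → ℝ) :
    BddBelow (chainSet d β) := by
  refine ⟨0, fun r hr => ?_⟩
  obtain ⟨α, _, _, rfl⟩ := hr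
  exact chainVal_nonneg h0 α

lemma NN_nonneg (h0 : ∀ x, 0 ≤ d x) (β : (Fin (n + 2) → X) → ℝ) : 0 ≤ NN d β := by
  refine le_csInf (chainSet_nonempty β) (fun r hr => ?_)
  obtain ⟨α, _, _, rfl⟩ := hr
  exact chainVal_nonneg h0 α

lemma NN_le_val_of_alt (h0 : ∀ x, 0 ≤ d x) {β : (Fin (n + 2) → X) → ℝ} (hβ : AltChain β) :
    NN d β ≤ chainVal d β := by
  refine csInf_le (chainSet_bddBelow h0 β) ?_
  exact ⟨β, hβ, by rw [asymN_of_alt hβ], rfl⟩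

lemma NN_smul_le (h0 : ∀ x, 0 ≤ d x) {c : ℝ} (hc : 0 < c) (β : (Fin (n + 2) → X) → ℝ) :
    NN d (c • β) ≤ c * NN d β := by
  have step : ∀ r ∈ chainSet d β, NN d (c • β) ≤ c * r := by
    intro r hr
    obtain ⟨α, hα, hbd, rfl⟩ := hr
    refine csInf_le (chainSet_bddBelow h0 _) ?_
    refine ⟨c • α, alt_smul hα c, ?_, ?_⟩
    · rw [bdry_smul, hbd, asymN_smul, bdry_smul]
    · exact (chainVal_smul (le_of_lt hc) α).symm
  have h2 : NN d (c • β) / c ≤ NN d β := by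
    refine le_csInf (chainSet_nonempty β) (fun r hr => ?_)
    rw [div_le_iff₀ hc]
    calc NN d (c • β) ≤ c * r := step r hr
      _ = r * c := mul_comm _ _
  calc NN d (c • β) = c * (NN d (c • β) / c) := by field_simp
    _ ≤ c * NN d β := by nlinarith [h2]

lemma NN_hom (h0 : ∀ x, 0 ≤ d x) {c : ℝ} (hc : 0 < c) (β : (Fin (n + 2) → X) → ℝ) :
    NN d (c • β) = c * NN d β := by
  refine le_antisymm (NN_smul_le h0 hc β) ?_
  have := NN_smul_le h0 (inv_pos.2 hc) (c • β)
  rw [smul_smul, inv_mul_cancel₀ (ne_of_gt hc), one_smul] at this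
  calc c * NN d β ≤ c * (c⁻¹ * NN d (c • β)) := by nlinarith [this]
    _ = NN d (c • β) := by field_simp

lemma NN_add (h0 : ∀ x, 0 ≤ d x) (β γ : (Fin (n + 2) → X) → ℝ) :
    NN d (β + γ) ≤ NN d β + NN d γ := by
  have step : ∀ r₁ ∈ chainSet d β, ∀ r₂ ∈ chainSet d γ, NN d (β + γ) ≤ r₁ + r₂ := by
    intro r₁ h₁ r₂ h₂
    obtain ⟨α₁, ha₁, hb₁, rfl⟩ := h₁
    obtain ⟨α₂, ha₂, hb₂, rfl⟩ := h₂
    have hmem : chainVal d (α₁ + α₂) ∈ chainSet d (β + γ) := by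
      refine ⟨α₁ + α₂, alt_add ha₁ ha₂, ?_, rfl⟩
      rw [bdry_add, hb₁, hb₂, asymN_add, bdry_add]
    calc NN d (β + γ) ≤ chainVal d (α₁ + α₂) := csInf_le (chainSet_bddBelow h0 _) hmem
      _ ≤ chainVal d α₁ + chainVal d α₂ := by
          rw [chainVal, chainVal, chainVal, ← mul_add, ← Finset.sum_add_distrib]
          refine mul_le_mul_of_nonneg_left ?_ (inv_nonneg.2 (le_of_lt facpos))
          refine Finset.sum_le_sum (fun s _ => ?_)
          show |α₁ s + α₂ s| * d s ≤ _
          refine mul_le_mul_of_nonneg_right (abs_add_le _ _) (h0 s) |>.trans ?_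
          rw [add_mul]
  have h2 : ∀ r₂ ∈ chainSet d γ, NN d (β + γ) - r₂ ≤ NN d β := by
    intro r₂ h₂
    refine le_csInf (chainSet_nonempty β) (fun r₁ h₁ => ?_)
    have := step r₁ h₁ r₂ h₂
    linarith
  have h3 : NN d (β + γ) - NN d β ≤ NN d γ := by
    refine le_csInf (chainSet_nonempty γ) (fun r₂ hr₂ => ?_)
    have := h2 r₂ hr₂
    linarith
  linarith

lemma NN_le_zero (h0 : ∀ x, 0 ≤ d x) {β : (Fin (n + 2) → X) → ℝ}
    (hβ : bdry (asymN β) = 0) : NN d β ≤ 0 := by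
  have hmem : (0 : ℝ) ∈ chainSet d β := by
    refine ⟨0, alt_zero, by rw [bdry_zero, hβ], ?_⟩
    rw [chainVal]
    have : ∀ s : Fin (n+2) → X, |(0 : (Fin (n+2) → X) → ℝ) s| * d s = 0 := by
      intro s; show |(0:ℝ)| * d s = 0; rw [abs_zero, zero_mul]
    rw [Finset.sum_congr rfl (fun s _ => this s), Finset.sum_const, smul_zero, mul_zero]
  exact csInf_le (chainSet_bddBelow h0 β) hmem

lemma chainVal_unitChain (h0 : ∀ x, 0 ≤ d x)
    (hperm : ∀ (π : Equiv.Perm (Fin (n + 2))) x, d (x ∘ π) = d x)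
    {s : Fin (n + 2) → X} (hs : Function.Injective s) :
    chainVal d (unitChain s) = d s := by
  rw [chainVal, sum_abs_unitChain hs hperm, ← mul_assoc,
    inv_mul_cancel₀ (ne_of_gt facpos), one_mul]

lemma chainVal_neg (α : (Fin (n + 2) → X) → ℝ) : chainVal d (-α) = chainVal d α := by
  rw [chainVal, chainVal]
  congr 1
  refine Finset.sum_congr rfl (fun s _ => ?_)
  show |(-(α s))| * d s = _
  rw [abs_neg]

end NN

section Ext
variable [Fintype X] [DecidableEq X]

lemma ext_lemma {d : (Fin (n + 2) → X) → ℝ} (hd : IsStrongPseudoMetric (n + 1) d)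
    {t : Fin (n + 2) → X} (ht : Function.Injective t) :
    ∃ f : (Fin (n + 1) → X) → ℝ, AltChain f ∧ AltChain (cobdry f) ∧
      (∀ s, |cobdry f s| ≤ d s) ∧ cobdry f t = d t := by
  classical
  have h0 : ∀ x, 0 ≤ d x := hd.nonneg
  have hperm : ∀ (π : Equiv.Perm (Fin (n + 2))) x, d (x ∘ π) = d x := hd.perm
  have hfacpos : (0 : ℝ) < ((n + 2).factorial : ℝ) := by exact_mod_cast Nat.factorial_pos (n + 2)
  have h1t_ne : unitChain t ≠ 0 := unitChain_ne_zero ht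
  -- `d t ≤ NN d (unitChain t)` from the strong simplex inequality
  have hNt : d t ≤ NN d (unitChain t) := by
    refine le_csInf (chainSet_nonempty _) (fun r hr => ?_)
    obtain ⟨α, hα, hbd, rfl⟩ := hr
    rw [asymN_of_alt (unitChain_alt t)] at hbd
    have hss := hd.strong_simplex t ht α hα hbd
    rw [chainVal]
    calc d t = (((n + 2).factorial : ℝ))⁻¹ * (((n + 2).factorial : ℝ) * d t) := by
          field_simp
      _ ≤ _ := mul_le_mul_of_nonneg_left hss (inv_nonneg.2 (le_of_lt hfacpos))
  -- Hahn–Banach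
  set pm : ((Fin (n + 2) → X) → ℝ) →ₗ.[ℝ] ℝ :=
    LinearPMap.mkSpanSingleton (unitChain t) (d t) h1t_ne with hpm
  have hf : ∀ x : pm.domain, pm x ≤ NN d x := by
    rintro ⟨x, hx⟩
    obtain ⟨c, hc⟩ := Submodule.mem_span_singleton.1 hx
    have hx2 : c • unitChain t ∈ pm.domain :=
      Submodule.smul_mem _ c (Submodule.mem_span_singleton_self _)
    have hxe : (⟨x, hx⟩ : pm.domain) = ⟨c • unitChain t, hx2⟩ := Subtype.ext hc.symm
    have happ : pm ⟨c • unitChain t, hx2⟩ = c • d t :=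
      LinearPMap.mkSpanSingleton'_apply (unitChain t) (d t) _ c hx2
    have hcoe : ((⟨c • unitChain t, hx2⟩ : pm.domain) : (Fin (n + 2) → X) → ℝ)
        = c • unitChain t := rfl
    rw [hxe, happ, hcoe]
    rcases lt_trichotomy c 0 with hneg | rfl | hpos
    · have : c • d t ≤ 0 := by
        rw [smul_eq_mul]
        exact mul_nonpos_of_nonpos_of_nonneg (le_of_lt hneg) (h0 t)
      exact this.trans (NN_nonneg h0 _)
    · rw [zero_smul, zero_smul]
      exact NN_nonneg h0 _
    · rw [NN_hom h0 hpos, smul_eq_mul]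
      exact mul_le_mul_of_nonneg_left hNt (le_of_lt hpos)
  obtain ⟨g, hg_ext, hg_le⟩ :=
    exists_extension_of_le_sublinear pm (NN d)
      (fun c hc x => NN_hom h0 hc x) (fun x y => NN_add h0 x y) hf
  -- value of `g` on `unitChain t`
  have hg1t : g (unitChain t) = d t := by
    have h1 := hg_ext ⟨unitChain t, Submodule.mem_span_singleton_self _⟩
    have h2 : pm ⟨unitChain t, Submodule.mem_span_singleton_self _⟩ = d t :=
      LinearPMap.mkSpanSingleton_apply ℝ ℝ h1t_ne (d t)
    exact h1.trans h2
  -- bounds on `g` at unit chains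
  have hg_ub : ∀ β : (Fin (n + 2) → X) → ℝ, AltChain β → g β ≤ chainVal d β :=
    fun β hβ => (hg_le β).trans (NN_le_val_of_alt h0 hβ)
  have hg_abs : ∀ s : Fin (n + 2) → X, Function.Injective s →
      |g (unitChain s)| ≤ d s := by
    intro s hs
    have hub : g (unitChain s) ≤ d s :=
      (hg_ub _ (unitChain_alt s)).trans_eq (chainVal_unitChain h0 hperm hs)
    have hlb : g (-unitChain s) ≤ d s := by
      refine (hg_ub _ (alt_neg (unitChain_alt s))).trans_eq ?_
      rw [chainVal_neg, chainVal_unitChain h0 hperm hs]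
    rw [map_neg] at hlb
    exact abs_le.2 ⟨by linarith, hub⟩
  -- factor `g` through the boundary map
  set T : ((Fin (n + 2) → X) → ℝ) →ₗ[ℝ] ((Fin (n + 1) → X) → ℝ) :=
    (bdryLM (n := n + 1)).comp ((((n + 2).factorial : ℝ))⁻¹ • AsymLM) with hTdef
  have hT : ∀ β, T β = bdry (asymN β) := fun β => rfl
  have hker : LinearMap.ker T ≤ LinearMap.ker g := by
    intro β hβ
    rw [LinearMap.mem_ker] at hβ ⊢
    rw [hT] at hβ
    have hn1 : NN d β ≤ 0 := NN_le_zero h0 hβ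
    have hn2 : NN d (-β) ≤ 0 := by
      refine NN_le_zero h0 ?_
      rw [asymN_neg, bdry_neg, hβ, neg_zero]
    have hb1 := hg_le β
    have hb2 := hg_le (-β)
    rw [map_neg] at hb2
    linarith
  set ψ₁ := (LinearMap.ker T).liftQ g hker with hψ₁def
  set eT := T.quotKerEquivRange with heTdef
  obtain ⟨ψ, hψ⟩ := LinearMap.exists_extend (ψ₁.comp eT.symm.toLinearMap)
  have hψT : ∀ β, ψ (T β) = g β := by
    intro β
    have hmem : T β ∈ LinearMap.range T := LinearMap.mem_range_self T β
    have h1 : eT (Submodule.Quotient.mk β) = ⟨T β, hmem⟩ :=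
      Subtype.ext (LinearMap.quotKerEquivRange_apply_mk T β)
    have h2 : eT.symm ⟨T β, hmem⟩ = Submodule.Quotient.mk β := by
      rw [← h1, LinearEquiv.symm_apply_apply]
    have h3 : ψ (T β) = (ψ.comp (LinearMap.range T).subtype) ⟨T β, hmem⟩ := rfl
    rw [h3, hψ]
    show ψ₁ (eT.symm ⟨T β, hmem⟩) = g β
    rw [h2, hψ₁def]
    exact Submodule.liftQ_apply _ g β
  -- the representing cochain
  set G₀ : (Fin (n + 1) → X) → ℝ := fun y => ψ (Pi.single y 1) with hG₀def
  have hrepr : ∀ w : (Fin (n + 1) → X) → ℝ, ψ w = ∑ y : Fin (n + 1) → X, w y * G₀ y := by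
    intro w
    conv_lhs => rw [pi_eq_sum_univ w, map_sum]
    refine Finset.sum_congr rfl (fun y _ => ?_)
    rw [map_smul, smul_eq_mul]
    congr 1
    congr 1
    funext j
    rw [Pi.single_apply]
    exact if_congr eq_comm rfl rfl
  -- pairing identity for alternating chains
  have hg_pair : ∀ β : (Fin (n + 2) → X) → ℝ, AltChain β →
      ((n + 2).factorial : ℝ) * g β
        = ∑ s : Fin (n + 2) → X, cobdry (Asym G₀) s * β s := by
    intro β hβ
    have h1 : g β = ∑ y : Fin (n + 1) → X, G₀ y * bdry β y := by
      rw [← hψT β, hT β, asymN_of_alt hβ, hrepr (bdry β)]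
      exact Finset.sum_congr rfl (fun y _ => mul_comm _ _)
    have h2 : g β = ∑ s : Fin (n + 2) → X, G₀ (s ∘ Fin.succ) * β s := by
      rw [h1, tail_pair]
    have h3 : ∑ s : Fin (n + 2) → X, Asym (fun x : Fin (n + 2) → X => G₀ (x ∘ Fin.succ)) s * β s
        = ((n + 2).factorial : ℝ) * ∑ s : Fin (n + 2) → X, G₀ (s ∘ Fin.succ) * β s := by
      rw [asym_pair, Finset.mul_sum]
      refine Finset.sum_congr rfl (fun s _ => ?_)
      rw [asym_of_alt hβ]
      show G₀ (s ∘ Fin.succ) * (((n + 2).factorial : ℝ) * β s) = _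
      ring
    rw [h2, ← asym_tail, h3]
  have hH_alt : AltChain (cobdry (Asym G₀)) := by
    rw [← asym_tail]
    exact asym_alt _
  have hHs : ∀ s : Fin (n + 2) → X, cobdry (Asym G₀) s = g (unitChain s) := by
    intro s
    have p1 := pairing_unitChain hH_alt s
    have p2 := hg_pair (unitChain s) (unitChain_alt s)
    have p3 : ∑ s' : Fin (n + 2) → X, cobdry (Asym G₀) s' * unitChain s s'
        = ∑ s' : Fin (n + 2) → X, unitChain s s' * cobdry (Asym G₀) s' :=
      Finset.sum_congr rfl (fun s' _ => mul_comm _ _)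
    refine mul_left_cancel₀ (ne_of_gt hfacpos) ?_
    rw [← p1, ← p3]
    exact p2.symm
  refine ⟨Asym G₀, asym_alt _, hH_alt, ?_, ?_⟩
  · intro s
    by_cases hs : Function.Injective s
    · rw [hHs s]
      exact hg_abs s hs
    · rw [alt_eq_zero_of_not_injective hH_alt hs, hd.eq_zero s hs, abs_zero]
  · rw [hHs t, hg1t]

end Ext

section Stokes
variable [Fintype X]

lemma stokes {f : (Fin (n + 1) → X) → ℝ} (hf : AltChain f)
    {β : (Fin (n + 2) → X) → ℝ} (hβ : AltChain β) :
    ((n + 1).factorial : ℝ) * ∑ s : Fin (n + 2) → X, cobdry f s * β s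
      = ((n + 2).factorial : ℝ) * ∑ y : Fin (n + 1) → X, f y * bdry β y := by
  have h1 : cobdry (Asym f) = ((n + 1).factorial : ℝ) • cobdry f := by
    rw [asym_of_alt hf, cobdry_smul]
  calc ((n + 1).factorial : ℝ) * ∑ s : Fin (n + 2) → X, cobdry f s * β s
      = ∑ s : Fin (n + 2) → X, cobdry (Asym f) s * β s := by
        rw [h1, Finset.mul_sum]
        refine Finset.sum_congr rfl (fun s _ => ?_)
        show _ = (((n + 1).factorial : ℝ) * cobdry f s) * β s
        ring
    _ = ∑ s : Fin (n + 2) → X, Asym (fun x : Fin (n + 2) → X => f (x ∘ Fin.succ)) s * β s := by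
        rw [asym_tail]
    _ = ∑ s : Fin (n + 2) → X, f (s ∘ Fin.succ) * Asym β s := asym_pair _ _
    _ = ((n + 2).factorial : ℝ) * ∑ s : Fin (n + 2) → X, f (s ∘ Fin.succ) * β s := by
        rw [Finset.mul_sum]
        refine Finset.sum_congr rfl (fun s _ => ?_)
        rw [asym_of_alt hβ]
        show f (s ∘ Fin.succ) * (((n + 2).factorial : ℝ) * β s) = _
        ring
    _ = ((n + 2).factorial : ℝ) * ∑ y : Fin (n + 1) → X, f y * bdry β y := by
        rw [tail_pair]

end Stokes

section Converse
variable [Fintype X] [DecidableEq X]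

lemma converse_lemma {k m : ℕ} {d : (Fin (k + 2) → X) → ℝ}
    (h : IsCoboundaryMetric k m linfNorm d) : IsStrongPseudoMetric (k + 1) d := by
  classical
  obtain ⟨f, halt, hinj, hnon⟩ := h
  have hcob_alt : ∀ i, AltChain (cobdry (f i)) := fun i => alt_cobdry (halt i)
  have habs : ∀ i x, |cobdry (f i) x| ≤ d x := by
    intro i x
    by_cases hx : Function.Injective x
    · rw [hinj x hx, linfNorm]
      have h2 := norm_le_pi_norm (fun j => cobdry (f j) x) i
      rwa [Real.norm_eq_abs] at h2
    · rw [alt_eq_zero_of_not_injective (hcob_alt i) hx, hnon x hx, abs_zero]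
  have hd0 : ∀ x, 0 ≤ d x := by
    intro x
    by_cases hx : Function.Injective x
    · rw [hinj x hx]; exact norm_nonneg _
    · rw [hnon x hx]
  refine ⟨hd0, hnon, ?_, ?_⟩
  · -- permutation invariance
    intro π x
    by_cases hx : Function.Injective x
    · have hxπ : Function.Injective (x ∘ π) := hx.comp π.injective
      rw [hinj _ hxπ, hinj _ hx, linfNorm, linfNorm]
      have hv : (fun i => cobdry (f i) (x ∘ π)) = sgn π • (fun i => cobdry (f i) x) := by
        funext i
        show cobdry (f i) (x ∘ π) = sgn π * cobdry (f i) x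
        exact hcob_alt i π x
      rw [hv, norm_smul, Real.norm_eq_abs, abs_sgn, one_mul]
    · have hxπ : ¬ Function.Injective (x ∘ π) := by
        intro hc
        apply hx
        have h3 : x = (x ∘ ⇑π) ∘ ⇑π⁻¹ := (comp_comp_inv x π).symm
        rw [h3]
        exact hc.comp (π⁻¹).injective
      rw [hnon _ hxπ, hnon _ hx]
  · -- strong simplex inequality
    intro t ht α hα hbd
    have hS0 : 0 ≤ ∑ s : Fin (k + 2) → X, |α s| * d s :=
      Finset.sum_nonneg (fun s _ => mul_nonneg (abs_nonneg _) (hd0 s))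
    have key : ∀ i, ((k + 2).factorial : ℝ) * |cobdry (f i) t|
        ≤ ∑ s : Fin (k + 2) → X, |α s| * d s := by
      intro i
      have e1 : ∑ s : Fin (k + 2) → X, unitChain t s * cobdry (f i) s
          = ((k + 2).factorial : ℝ) * cobdry (f i) t :=
        pairing_unitChain (hcob_alt i) t
      have e2 := stokes (halt i) (unitChain_alt t)
      have e3 := stokes (halt i) hα
      rw [hbd] at e3
      have e4 : ∑ s : Fin (k + 2) → X, cobdry (f i) s * unitChain t s
          = ∑ s : Fin (k + 2) → X, cobdry (f i) s * α s := by
        have hfac : ((k + 1).factorial : ℝ) ≠ 0 := by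
          exact_mod_cast Nat.factorial_ne_zero (k + 1)
        exact mul_left_cancel₀ hfac (e2.trans e3.symm)
      have e5 : ((k + 2).factorial : ℝ) * cobdry (f i) t
          = ∑ s : Fin (k + 2) → X, cobdry (f i) s * α s := by
        rw [← e4, ← e1]
        exact Finset.sum_congr rfl (fun s _ => mul_comm _ _)
      have e6 : |∑ s : Fin (k + 2) → X, cobdry (f i) s * α s|
          ≤ ∑ s : Fin (k + 2) → X, |α s| * d s := by
        refine (Finset.abs_sum_le_sum_abs _ _).trans ?_
        refine Finset.sum_le_sum (fun s _ => ?_)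
        rw [abs_mul, mul_comm]
        exact mul_le_mul_of_nonneg_left (habs i s) (abs_nonneg _)
      calc ((k + 2).factorial : ℝ) * |cobdry (f i) t|
          = |((k + 2).factorial : ℝ) * cobdry (f i) t| := by
            rw [abs_mul, abs_of_nonneg (by positivity : (0:ℝ) ≤ ((k + 2).factorial : ℝ))]
        _ ≤ ∑ s : Fin (k + 2) → X, |α s| * d s := by rw [e5]; exact e6
    have hfacpos : (0 : ℝ) < ((k + 2).factorial : ℝ) := by
      exact_mod_cast Nat.factorial_pos (k + 2)
    rw [hinj t ht, linfNorm]
    rw [show ((k + 1 + 1).factorial : ℝ) = ((k + 2).factorial : ℝ) from rfl]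
    have hnorm : ‖fun i => cobdry (f i) t‖
        ≤ (∑ s : Fin (k + 2) → X, |α s| * d s) / ((k + 2).factorial : ℝ) := by
      rw [pi_norm_le_iff_of_nonneg (div_nonneg hS0 (le_of_lt hfacpos))]
      intro i
      rw [Real.norm_eq_abs, le_div_iff₀ hfacpos, mul_comm]
      exact key i
    calc ((k + 2).factorial : ℝ) * ‖fun i => cobdry (f i) t‖
        ≤ ((k + 2).factorial : ℝ)
          * ((∑ s : Fin (k + 2) → X, |α s| * d s) / ((k + 2).factorial : ℝ)) :=
          mul_le_mul_of_nonneg_left hnorm (le_of_lt hfacpos)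
      _ = ∑ s : Fin (k + 2) → X, |α s| * d s := by field_simp

end Converse

section Main
variable [Fintype X] [DecidableEq X]

lemma main_lemma {k : ℕ} {d : (Fin (k + 2) → X) → ℝ}
    (hd : IsStrongPseudoMetric (k + 1) d) :
    IsCoboundaryMetric k ((Fintype.card X).choose (k + 2)) linfNorm d := by
  classical
  set m := (Fintype.card X).choose (k + 2) with hm
  set S : Finset (Finset X) := Finset.univ.powersetCard (k + 2) with hS
  have hcardS : S.card = m := by
    rw [hS, Finset.card_powersetCard, Finset.card_univ, hm]
  set eS : {s // s ∈ S} ≃ Fin m := Finset.equivFinOfCardEq hcardS with heS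
  have htuple : ∀ σ : {s // s ∈ S}, ∃ t : Fin (k + 2) → X, Function.Injective t ∧
      ∀ j, t j ∈ (σ : Finset X) := by
    intro σ
    have hc : (σ : Finset X).card = k + 2 := (Finset.mem_powersetCard.1 σ.2).2
    set e := Finset.equivFinOfCardEq hc with he
    refine ⟨fun j => (e.symm j : X), ?_, ?_⟩
    · intro a b hab
      exact e.symm.injective (Subtype.ext hab)
    · intro j
      exact (e.symm j).2
  choose tup htinj htmem using htuple
  have hchain := fun σ : {s // s ∈ S} => ext_lemma hd (htinj σ)
  choose F hF1 hF2 hF3 hF4 using hchain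
  refine ⟨fun i => F (eS.symm i), fun i => hF1 _, ?_, fun x hx => hd.eq_zero x hx⟩
  intro x hx
  have hximg : (Finset.univ.image x) ∈ S := by
    rw [hS, Finset.mem_powersetCard]
    refine ⟨Finset.subset_univ _, ?_⟩
    rw [Finset.card_image_of_injective _ hx, Finset.card_univ, Fintype.card_fin]
  set σx : {s // s ∈ S} := ⟨Finset.univ.image x, hximg⟩ with hσx
  have hcardσ : Fintype.card {a // a ∈ (σx : Finset X)} = k + 2 := by
    rw [Fintype.card_coe]
    exact (Finset.mem_powersetCard.1 σx.2).2
  -- x is a reordering of `tup σx`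
  obtain ⟨π, hπ⟩ : ∃ π : Equiv.Perm (Fin (k + 2)), x = tup σx ∘ ⇑π := by
    have hexb : Function.Bijective
        (fun j => (⟨x j, Finset.mem_image_of_mem x (Finset.mem_univ j)⟩ :
          {a // a ∈ (σx : Finset X)})) := by
      rw [Fintype.bijective_iff_injective_and_card]
      constructor
      · intro a b hab
        exact hx (congrArg Subtype.val hab)
      · rw [hcardσ, Fintype.card_fin]
    have hetb : Function.Bijective
        (fun j => (⟨tup σx j, htmem σx j⟩ : {a // a ∈ (σx : Finset X)})) := by
      rw [Fintype.bijective_iff_injective_and_card]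
      constructor
      · intro a b hab
        exact htinj σx (congrArg Subtype.val hab)
      · rw [hcardσ, Fintype.card_fin]
    set ex := Equiv.ofBijective _ hexb
    set et := Equiv.ofBijective _ hetb
    refine ⟨ex.trans et.symm, ?_⟩
    funext j
    show x j = tup σx (et.symm (ex j))
    have h1 : et (et.symm (ex j)) = ex j := et.apply_symm_apply (ex j)
    have h2 : (et (et.symm (ex j)) : X) = tup σx (et.symm (ex j)) := rfl
    have h3 : (ex j : X) = x j := rfl
    have h4 := congrArg Subtype.val h1
    exact (h3.symm.trans h4.symm).trans h2
  have hub : ∀ i, |cobdry (F (eS.symm i)) x| ≤ d x := fun i => hF3 _ x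
  have hval : |cobdry (F σx) x| = d x := by
    have h1 : cobdry (F σx) x = sgn π * cobdry (F σx) (tup σx) := by
      rw [hπ]
      exact hF2 σx π (tup σx)
    have h2 : d x = d (tup σx) := by
      rw [hπ]
      exact hd.perm π (tup σx)
    rw [h1, hF4, abs_mul, abs_sgn, one_mul, h2, abs_of_nonneg (hd.nonneg _)]
  rw [linfNorm]
  refine le_antisymm ?_ ?_
  · calc d x = |cobdry (F σx) x| := hval.symm
      _ = ‖(fun i => cobdry (F (eS.symm i)) x) (eS σx)‖ := by
          show _ = ‖cobdry (F (eS.symm (eS σx))) x‖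
          rw [Equiv.symm_apply_apply, Real.norm_eq_abs]
      _ ≤ ‖fun i => cobdry (F (eS.symm i)) x‖ :=
          norm_le_pi_norm (fun i => cobdry (F (eS.symm i)) x) (eS σx)
  · rw [pi_norm_le_iff_of_nonneg (hd.nonneg x)]
    intro i
    rw [Real.norm_eq_abs]
    exact hub i

end Main

end Stmt8

/-- every strong pseudo metric of arity `k + 2` on an `n`-point set
is in `C_{k+2,∞}^{binom(n, k+2)}`; consequently the coboundary metrics with
respect to the `ℓ_∞` (sup) norm are exactly the strong pseudo metrics. -/
theorem stmt_8 (k : ℕ) {X : Type*} [Fintype X] [DecidableEq X]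
    (d : (Fin (k + 2) → X) → ℝ) :
    (IsStrongPseudoMetric (k + 1) d →
      IsCoboundaryMetric k ((Fintype.card X).choose (k + 2)) linfNorm d) ∧
    (IsStrongPseudoMetric (k + 1) d ↔
      ∃ m : ℕ, IsCoboundaryMetric k m linfNorm d) := by
  refine ⟨fun hd => Stmt8.main_lemma hd, ?_, ?_⟩
  · intro hd
    exact ⟨(Fintype.card X).choose (k + 2), Stmt8.main_lemma hd⟩
  · rintro ⟨m, hcb⟩
    exact Stmt8.converse_lemma hcb
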